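/- arXiv:2304.10536 — 2 statements merged into one kernel-verified Lean document; each statement's English description precedes it below -/
import Mathlib

section
/- (Ruhe's trace inequality.) Let A and B be n×n positive semidefinite Hermitian matrices. Then tr(AB) ≥ Σ_{i=1}^n σ_i(A)·σ_{n−i+1}(B), where σ_1(A) ≥ σ_2(A) ≥ … ≥ σ_n(A) and σ_1(B) ≥ … ≥ σ_n(B) are the singular values (equivalently, the eigenvalues) of A and B sorted in decreasing order. -/
open Finset Matrix
open scoped ComplexOrder

private lemma ruhe_trace_form {n : ℕ} (d e : Fin n → ℂ) (W : Matrix (Fin n) (Fin n) ℂ) :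
    (Matrix.diagonal d * (W * (Matrix.diagonal e * star W))).trace
      = ∑ i, ∑ j, d i * e j * (W i j * star (W i j)) := by
  simp only [Matrix.trace, Matrix.diag, Matrix.mul_apply, Matrix.diagonal_apply,
    Matrix.star_apply, ite_mul, zero_mul, Finset.sum_ite_eq, Finset.mem_univ, if_pos]
  refine Finset.sum_congr rfl fun i _ => ?_
  rw [Finset.mul_sum]
  refine Finset.sum_congr rfl fun j _ => ?_
  ring

private lemma ruhe_rearrange {n : ℕ} {f g : Fin n → ℝ} (hf : Antitone f) (hg : Antitone g)
    (π : Equiv.Perm (Fin n)) :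
    ∑ i, f i * g i.rev ≤ ∑ i, f i * g (π i) := by
  have hg' : Monotone (g ∘ Fin.rev) := fun i j h => hg (Fin.rev_le_rev.mpr h)
  have hfg : Antivary f (g ∘ Fin.rev) := hf.antivary hg'
  have := hfg.sum_mul_le_sum_mul_comp_perm (σ := π.trans Fin.revPerm)
  simpa [Function.comp, Fin.rev_rev] using this

/-- Ruhe's trace inequality: for `n×n` positive semidefinite Hermitian matrices `A` and `B`,
`tr(AB) ≥ Σ_{i=1}^n σ_i(A)·σ_{n−i+1}(B)`, where `σA` and `σB` enumerate the eigenvalues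
(= singular values) of `A` and `B` sorted in decreasing order. -/
theorem ruhe_trace_inequality (n : ℕ) (A B : Matrix (Fin n) (Fin n) ℂ)
    (hA : A.PosSemidef) (hB : B.PosSemidef)
    (σA σB : Fin n → ℝ)
    (hσA : Antitone σA) (hσB : Antitone σB)
    (hσA' : ∃ e : Equiv.Perm (Fin n), ∀ i, σA i = hA.isHermitian.eigenvalues (e i))
    (hσB' : ∃ e : Equiv.Perm (Fin n), ∀ i, σB i = hB.isHermitian.eigenvalues (e i)) :
    ∑ i, σA i * σB i.rev ≤ ((A * B).trace).re := by
  obtain ⟨eA, heA⟩ := hσA'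
  obtain ⟨eB, heB⟩ := hσB'
  set lam : Fin n → ℝ := hA.isHermitian.eigenvalues with hlam
  set mu : Fin n → ℝ := hB.isHermitian.eigenvalues with hmu
  set U : Matrix (Fin n) (Fin n) ℂ := (hA.isHermitian.eigenvectorUnitary : Matrix (Fin n) (Fin n) ℂ) with hU
  set V : Matrix (Fin n) (Fin n) ℂ := (hB.isHermitian.eigenvectorUnitary : Matrix (Fin n) (Fin n) ℂ) with hV
  set W : Matrix (Fin n) (Fin n) ℂ := star U * V with hWdef
  have hWmem : W ∈ Matrix.unitaryGroup (Fin n) ℂ := by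
    have := mul_mem (Unitary.star_mem (hA.isHermitian.eigenvectorUnitary).2)
      (hB.isHermitian.eigenvectorUnitary).2
    exact this
  have hWW : W * star W = 1 := Matrix.mem_unitaryGroup_iff.mp hWmem
  have hWW' : star W * W = 1 := Matrix.mem_unitaryGroup_iff'.mp hWmem
  -- trace formula
  have htr : (A * B).trace
      = ∑ i, ∑ j, (lam i : ℂ) * (mu j : ℂ) * (W i j * star (W i j)) := by
    rw [← ruhe_trace_form]
    conv_lhs => rw [hA.isHermitian.spectral_theorem, hB.isHermitian.spectral_theorem]
    simp only [Unitary.conjStarAlgAut_apply, hWdef, Matrix.star_mul, star_star, mul_assoc, Function.comp, ← hlam, ← hmu, ← hU, ← hV]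
    rw [Matrix.trace_mul_comm]
    simp only [mul_assoc]
    rfl
  -- real part
  have hre : ((A * B).trace).re = ∑ i, ∑ j, lam i * mu j * Complex.normSq (W i j) := by
    rw [htr]
    rw [Complex.re_sum]
    refine Finset.sum_congr rfl fun i _ => ?_
    rw [Complex.re_sum]
    refine Finset.sum_congr rfl fun j _ => ?_
    have : W i j * star (W i j) = (Complex.normSq (W i j) : ℂ) := Complex.mul_conj _
    rw [this]
    simp
  -- doubly stochastic matrix
  set M : Matrix (Fin n) (Fin n) ℝ := Matrix.of fun i j => Complex.normSq (W i j) with hM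
  have hrow : ∀ i, ∑ j, M i j = 1 := by
    intro i
    have h1 : (W * star W) i i = 1 := by rw [hWW]; simp
    rw [Matrix.mul_apply] at h1
    have : ((∑ j, M i j : ℝ) : ℂ) = 1 := by
      rw [← h1]
      push_cast
      refine Finset.sum_congr rfl fun j _ => ?_
      simp only [hM, Matrix.of_apply, Matrix.star_apply]
      exact (Complex.mul_conj _).symm
    exact_mod_cast this
  have hcol : ∀ j, ∑ i, M i j = 1 := by
    intro j
    have h1 : (star W * W) j j = 1 := by rw [hWW']; simp
    rw [Matrix.mul_apply] at h1
    have : ((∑ i, M i j : ℝ) : ℂ) = 1 := by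
      rw [← h1]
      push_cast
      refine Finset.sum_congr rfl fun i _ => ?_
      simp only [hM, Matrix.of_apply, Matrix.star_apply]
      rw [mul_comm]
      exact (Complex.mul_conj _).symm
    exact_mod_cast this
  have hMds : M ∈ doublyStochastic ℝ (Fin n) := by
    rw [mem_doublyStochastic_iff_sum]
    exact ⟨fun i j => Complex.normSq_nonneg _, hrow, hcol⟩
  obtain ⟨w, hw0, hw1, hwM⟩ := exists_eq_sum_perm_of_mem_doublyStochastic hMds
  -- value on permutation matrices
  have hperm : ∀ π : Equiv.Perm (Fin n),
      ∑ i, σA i * σB i.rev ≤ ∑ i, lam i * mu (π i) := by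
    intro π
    set τ : Equiv.Perm (Fin n) := eA.trans (π.trans eB.symm) with hτdef
    have hτ : ∀ i, σA i * σB (τ i) = lam (eA i) * mu (π (eA i)) := by
      intro i
      rw [heA, heB]
      simp [hτdef, ← hlam, ← hmu]
    calc ∑ i, σA i * σB i.rev ≤ ∑ i, σA i * σB (τ i) := ruhe_rearrange hσA hσB τ
      _ = ∑ i, lam (eA i) * mu (π (eA i)) := Finset.sum_congr rfl fun i _ => hτ i
      _ = ∑ i, lam i * mu (π i) := Equiv.sum_comp eA (fun i => lam i * mu (π i))
  -- expand the doubly stochastic matrix as a convex combination of permutation matrices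
  have hMentry : ∀ i j, M i j = ∑ π : Equiv.Perm (Fin n), w π * (if π i = j then 1 else 0) := by
    intro i j
    rw [← hwM]
    simp [Matrix.sum_apply, Equiv.Perm.permMatrix, PEquiv.toMatrix_apply,
      Equiv.toPEquiv_apply]
  have hexp : ∑ i, ∑ j, lam i * mu j * M i j
      = ∑ π : Equiv.Perm (Fin n), w π * ∑ i, lam i * mu (π i) := by
    calc ∑ i, ∑ j, lam i * mu j * M i j
        = ∑ i, ∑ π : Equiv.Perm (Fin n), ∑ j, lam i * mu j * (w π * (if π i = j then 1 else 0)) := by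
          refine Finset.sum_congr rfl fun i _ => ?_
          rw [Finset.sum_comm]
          refine Finset.sum_congr rfl fun j _ => ?_
          rw [hMentry i j, Finset.mul_sum]
      _ = ∑ π : Equiv.Perm (Fin n), ∑ i, ∑ j, lam i * mu j * (w π * (if π i = j then 1 else 0)) :=
          Finset.sum_comm
      _ = ∑ π : Equiv.Perm (Fin n), w π * ∑ i, lam i * mu (π i) := by
          refine Finset.sum_congr rfl fun π _ => ?_
          rw [Finset.mul_sum]
          refine Finset.sum_congr rfl fun i _ => ?_
          simp [mul_ite, Finset.sum_ite_eq, mul_comm, mul_assoc, mul_left_comm]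
  calc ∑ i, σA i * σB i.rev
      = ∑ π : Equiv.Perm (Fin n), w π * ∑ i, σA i * σB i.rev := by
        rw [← Finset.sum_mul, hw1, one_mul]
    _ ≤ ∑ π : Equiv.Perm (Fin n), w π * ∑ i, lam i * mu (π i) :=
        Finset.sum_le_sum fun π _ => mul_le_mul_of_nonneg_left (hperm π) (hw0 π)
    _ = ∑ i, ∑ j, lam i * mu j * M i j := hexp.symm
    _ = ((A * B).trace).re := by rw [hre]; rfl
end

section
/- (Quadratic majorizer of the sparse-prior objective.) Let γ > 0, 0 < p ≤ 2, σ > 0, y ∈ ℝ^m, A a real m×n matrix, and for i = 1, …, ℓ let G_i be a real d×n matrix and w_i ∈ ℝ^d with (w_i)_j ≥ 0. Define the objective J(x) = (1/(2σ²))·‖y − Ax‖₂² + Σ_{i=1}^ℓ Σ_{j=1}^d (w_i)_j ((G_i x)_j² + γ)^(p/2) for x ∈ ℝⁿ, and for x, x̄ ∈ ℝⁿ define Q(x; x̄) = (1/(2σ²))·‖y − Ax‖₂² + Σ_{i=1}^ℓ [ (p/2)·Σ_{j=1}^d (w_i)_j ((G_i x̄)_j² + γ)^((p−2)/2) (G_i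 x)_j² + (pγ/2)·Σ_{j=1}^d (w_i)_j ((G_i x̄)_j² + γ)^((p−2)/2) + ((2−p)/2)·Σ_{j=1}^d (w_i)_j ((G_i x̄)_j² + γ)^(p/2) ]. Then Q(x; x̄) ≥ J(x) for all x, x̄ ∈ ℝⁿ, and Q(x̄; x̄) = J(x̄) for all x̄ ∈ ℝⁿ. -/
open Finset Matrix

/-- The sparse-prior objective
`J(x) = (1/(2σ²))·‖y − Ax‖₂² + Σ_i Σ_j (w_i)_j ((G_i x)_j² + γ)^(p/2)`. -/
noncomputable def sparseObjective (m n d ℓ : ℕ) (γ p σ : ℝ) (y : Fin m → ℝ)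
    (A : Matrix (Fin m) (Fin n) ℝ) (G : Fin ℓ → Matrix (Fin d) (Fin n) ℝ)
    (w : Fin ℓ → Fin d → ℝ) (x : Fin n → ℝ) : ℝ :=
  1 / (2 * σ ^ 2) * ∑ k, (y k - (A *ᵥ x) k) ^ 2 +
    ∑ i, ∑ j, w i j * (((G i *ᵥ x) j) ^ 2 + γ) ^ (p / 2)

/-- The quadratic surrogate
`Q(x; x̄) = (1/(2σ²))·‖y − Ax‖₂² + Σ_i [ (p/2)·Σ_j (w_i)_j ((G_i x̄)_j²+γ)^((p−2)/2)(G_i x)_j²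
 + (pγ/2)·Σ_j (w_i)_j ((G_i x̄)_j²+γ)^((p−2)/2)
 + ((2−p)/2)·Σ_j (w_i)_j ((G_i x̄)_j²+γ)^(p/2) ]`. -/
noncomputable def sparseSurrogate (m n d ℓ : ℕ) (γ p σ : ℝ) (y : Fin m → ℝ)
    (A : Matrix (Fin m) (Fin n) ℝ) (G : Fin ℓ → Matrix (Fin d) (Fin n) ℝ)
    (w : Fin ℓ → Fin d → ℝ) (x xb : Fin n → ℝ) : ℝ :=
  1 / (2 * σ ^ 2) * ∑ k, (y k - (A *ᵥ x) k) ^ 2 +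
    ∑ i,
      (p / 2 * ∑ j, w i j * (((G i *ᵥ xb) j) ^ 2 + γ) ^ ((p - 2) / 2) * ((G i *ᵥ x) j) ^ 2 +
        p * γ / 2 * ∑ j, w i j * (((G i *ᵥ xb) j) ^ 2 + γ) ^ ((p - 2) / 2) +
        (2 - p) / 2 * ∑ j, w i j * (((G i *ᵥ xb) j) ^ 2 + γ) ^ (p / 2))

lemma key_ineq (γ p : ℝ) (hγ : 0 < γ) (hp : 0 < p) (hp2 : p ≤ 2) (a b : ℝ)
    (ha : γ ≤ a) (hb : γ ≤ b) :
    b ^ (p / 2) ≤ p / 2 * a ^ ((p - 2) / 2) * b + (2 - p) / 2 * a ^ (p / 2) := by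
  have ha0 : (0 : ℝ) < a := hγ.trans_le ha
  have hb0 : (0 : ℝ) < b := hγ.trans_le hb
  set q : ℝ := p / 2 with hq
  have hq0 : 0 ≤ q := by positivity
  have hq1 : q ≤ 1 := by rw [hq]; linarith
  have hs : (-1 : ℝ) ≤ b / a - 1 := by
    have : 0 ≤ b / a := by positivity
    linarith
  have hB := rpow_one_add_le_one_add_mul_self hs hq0 hq1
  rw [add_sub_cancel] at hB
  -- hB : (b/a)^q ≤ 1 + q * (b/a - 1)
  have hmul := mul_le_mul_of_nonneg_left hB (le_of_lt (Real.rpow_pos_of_pos ha0 q))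
  have hdiv : (b / a) ^ q = b ^ q / a ^ q := Real.div_rpow hb0.le ha0.le q
  rw [hdiv] at hmul
  have hane : a ^ q ≠ 0 := (Real.rpow_pos_of_pos ha0 q).ne'
  rw [mul_div_cancel₀ _ hane] at hmul
  have hsplit : a ^ q * (1 + q * (b / a - 1)) =
      q * (a ^ q / a) * b + (1 - q) * a ^ q := by
    field_simp
    ring
  rw [hsplit] at hmul
  have hpow : a ^ ((p - 2) / 2) = a ^ q / a := by
    rw [hq, eq_div_iff ha0.ne', ← Real.rpow_add_one ha0.ne']
    ring_nf
  rw [hpow]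
  have h1 : (2 - p) / 2 = 1 - q := by rw [hq]; ring
  rw [h1]
  exact hmul

/-- Quadratic majorizer of the sparse-prior objective: for `γ > 0`, `0 < p ≤ 2`, `σ > 0`
and nonnegative weights, the surrogate `Q(·; x̄)` dominates `J` everywhere and touches it
at `x̄`. -/
theorem sparse_objective_majorizer (m n d ℓ : ℕ) (γ p σ : ℝ)
    (hγ : 0 < γ) (hp : 0 < p) (hp2 : p ≤ 2) (hσ : 0 < σ)
    (y : Fin m → ℝ) (A : Matrix (Fin m) (Fin n) ℝ)
    (G : Fin ℓ → Matrix (Fin d) (Fin n) ℝ)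
    (w : Fin ℓ → Fin d → ℝ) (hw : ∀ i j, 0 ≤ w i j) :
    (∀ x xb : Fin n → ℝ,
      sparseSurrogate m n d ℓ γ p σ y A G w x xb ≥ sparseObjective m n d ℓ γ p σ y A G w x) ∧
    (∀ xb : Fin n → ℝ,
      sparseSurrogate m n d ℓ γ p σ y A G w xb xb = sparseObjective m n d ℓ γ p σ y A G w xb) := by
  constructor
  · intro x xb
    unfold sparseSurrogate sparseObjective
    apply add_le_add_right
    apply Finset.sum_le_sum
    intro i _
    rw [mul_sum, mul_sum, mul_sum, ← Finset.sum_add_distrib, ← Finset.sum_add_distrib]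
    apply Finset.sum_le_sum
    intro j _
    have hineq := key_ineq γ p hγ hp hp2 ((G i *ᵥ xb) j ^ 2 + γ) ((G i *ᵥ x) j ^ 2 + γ)
      (by nlinarith [sq_nonneg ((G i *ᵥ xb) j)]) (by nlinarith [sq_nonneg ((G i *ᵥ x) j)])
    have := mul_le_mul_of_nonneg_left hineq (hw i j)
    calc w i j * ((G i *ᵥ x) j ^ 2 + γ) ^ (p / 2)
        ≤ w i j * (p / 2 * ((G i *ᵥ xb) j ^ 2 + γ) ^ ((p - 2) / 2) * ((G i *ᵥ x) j ^ 2 + γ) +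
          (2 - p) / 2 * ((G i *ᵥ xb) j ^ 2 + γ) ^ (p / 2)) := this
      _ = p / 2 * (w i j * ((G i *ᵥ xb) j ^ 2 + γ) ^ ((p - 2) / 2) * (G i *ᵥ x) j ^ 2) +
          p * γ / 2 * (w i j * ((G i *ᵥ xb) j ^ 2 + γ) ^ ((p - 2) / 2)) +
          (2 - p) / 2 * (w i j * ((G i *ᵥ xb) j ^ 2 + γ) ^ (p / 2)) := by ring
  · intro xb
    unfold sparseSurrogate sparseObjective
    congr 1
    apply Finset.sum_congr rfl
    intro i _
    rw [mul_sum, mul_sum, mul_sum, ← Finset.sum_add_distrib, ← Finset.sum_add_distrib]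
    apply Finset.sum_congr rfl
    intro j _
    set t : ℝ := (G i *ᵥ xb) j ^ 2 + γ with ht
    have ht0 : (0 : ℝ) < t := by positivity
    have hpow : t ^ ((p - 2) / 2) * t = t ^ (p / 2) := by
      rw [← Real.rpow_add_one ht0.ne']; ring_nf
    have hts : t ^ ((p - 2) / 2) * (G i *ᵥ xb) j ^ 2 = t ^ (p/2) - γ * t ^ ((p-2)/2) := by
      rw [← hpow, ht]; ring
    calc p / 2 * (w i j * t ^ ((p - 2) / 2) * (G i *ᵥ xb) j ^ 2) +
          p * γ / 2 * (w i j * t ^ ((p - 2) / 2)) + (2 - p) / 2 * (w i j * t ^ (p / 2))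
        = w i j * (p / 2 * (t ^ ((p - 2) / 2) * (G i *ᵥ xb) j ^ 2) +
            (p * γ / 2 * t ^ ((p - 2) / 2) + (2 - p) / 2 * t ^ (p / 2))) := by ring
      _ = w i j * t ^ (p / 2) := by rw [hts]; ring_nf
end
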